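/- There exists an ultrafilter U on ℕ such that every member A ∈ U is a Δ-set of positive upper density; consequently for every A ∈ U and every ℓ ∈ ℕ there is a triple {b, c, b + ℓc} ⊆ A. -/

import Mathlib

open scoped Classical

noncomputable def upperDensity (A : Set ℕ) : ℝ :=
  Filter.limsup (fun n => (((Finset.Icc 1 n).filter (fun m => m ∈ A)).card : ℝ) / n) Filter.atTop

noncomputable def lowerDensity (A : Set ℕ) : ℝ :=
  Filter.liminf (fun n => (((Finset.Icc 1 n).filter (fun m => m ∈ A)).card : ℝ) / n) Filter.atTop

/-- The difference set Δ(X) = {x' - x : x, x' ∈ X, x' > x}. -/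
def diffSet (X : Set ℕ) : Set ℕ := {d | ∃ x ∈ X, ∃ x' ∈ X, x < x' ∧ x' - x = d}

/-- A is thick if it contains arbitrarily long intervals of consecutive integers. -/
def Thick (A : Set ℕ) : Prop := ∀ k : ℕ, ∃ a : ℕ, ∀ i < k, a + i ∈ A

/-- A is a Δ-set if it contains the difference set of some infinite X. -/
def IsDeltaSet (A : Set ℕ) : Prop := ∃ X : Set ℕ, X.Infinite ∧ diffSet X ⊆ A



open Filter

noncomputable def cnt (A : Set ℕ) (n : ℕ) : ℕ := ((Finset.Icc 1 n).filter (fun m => m ∈ A)).card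

noncomputable def dfun (A : Set ℕ) (n : ℕ) : ℝ := (cnt A n : ℝ) / n

def dzero (A : Set ℕ) : Prop := Filter.Tendsto (dfun A) Filter.atTop (nhds 0)
lemma dfun_nonneg (A : Set ℕ) (n : ℕ) : 0 ≤ dfun A n := by
  unfold dfun cnt; positivity

lemma card_le (A : Set ℕ) (n : ℕ) : ((Finset.Icc 1 n).filter (fun m => m ∈ A)).card ≤ n := by
  calc ((Finset.Icc 1 n).filter (fun m => m ∈ A)).card ≤ (Finset.Icc 1 n).card :=
        Finset.card_filter_le _ _
    _ = n := by rw [Nat.card_Icc]; omega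

lemma dfun_le_one (A : Set ℕ) (n : ℕ) : dfun A n ≤ 1 := by
  unfold dfun cnt
  rcases Nat.eq_zero_or_pos n with h | h
  · simp [h]
  · rw [div_le_one (by positivity)]
    exact_mod_cast card_le A n

lemma dzero_empty : dzero (∅ : Set ℕ) := by
  have : dfun (∅ : Set ℕ) = fun _ => 0 := by
    funext n; simp [dfun, cnt]
  rw [dzero, this]; exact tendsto_const_nhds

lemma dzero_union {X Y : Set ℕ} (hX : dzero X) (hY : dzero Y) : dzero (X ∪ Y) := by
  have hle : ∀ n, dfun (X ∪ Y) n ≤ dfun X n + dfun Y n := by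
    intro n
    rcases Nat.eq_zero_or_pos n with h | h
    · subst h
      simp only [dfun, cnt]
      simpa using add_nonneg (dfun_nonneg X 0) (dfun_nonneg Y 0)
    unfold dfun cnt
    rw [← add_div, div_le_div_iff_of_pos_right (by exact_mod_cast h)]
    have : (Finset.Icc 1 n).filter (fun m => m ∈ X ∪ Y)
        ⊆ ((Finset.Icc 1 n).filter (fun m => m ∈ X)) ∪ ((Finset.Icc 1 n).filter (fun m => m ∈ Y)) := by
      intro m hm
      simp only [Finset.mem_filter, Finset.mem_union, Set.mem_union] at hm ⊢
      tauto
    have hnat : ((Finset.Icc 1 n).filter (fun m => m ∈ X ∪ Y)).card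
        ≤ ((Finset.Icc 1 n).filter (fun m => m ∈ X)).card + ((Finset.Icc 1 n).filter (fun m => m ∈ Y)).card :=
      le_trans (Finset.card_le_card this) (Finset.card_union_le _ _)
    norm_cast
    convert hnat using 3
  have h0 : Tendsto (fun n => dfun X n + dfun Y n) atTop (nhds 0) := by
    simpa using hX.add hY
  exact squeeze_zero (dfun_nonneg _) hle h0

-- upperDensity interface
noncomputable def upperDensity' (A : Set ℕ) : ℝ := Filter.limsup (dfun A) Filter.atTop

lemma bddAbove (A : Set ℕ) : IsBoundedUnder (· ≤ ·) atTop (dfun A) :=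
  Filter.isBoundedUnder_of ⟨1, dfun_le_one A⟩

lemma bddBelow (A : Set ℕ) : IsBoundedUnder (· ≥ ·) atTop (dfun A) :=
  Filter.isBoundedUnder_of ⟨0, dfun_nonneg A⟩

lemma upperDensity'_nonneg (A : Set ℕ) : 0 ≤ upperDensity' A :=
  le_limsup_of_frequently_le (Filter.Frequently.of_forall (dfun_nonneg A)) (bddAbove A)

lemma dzero_of_upperDensity'_eq_zero {A : Set ℕ} (h : upperDensity' A = 0) : dzero A := by
  apply tendsto_of_le_liminf_of_limsup_le
  · exact le_liminf_of_le (bddAbove A).isCoboundedUnder_ge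
      (Filter.Eventually.of_forall (dfun_nonneg A))
  · exact h.le
  · exact bddAbove A
  · exact bddBelow A

lemma dzero_upperDensity' {A : Set ℕ} (h : dzero A) : upperDensity' A = 0 :=
  h.limsup_eq


noncomputable def badSet (D : Set ℕ) (a N : ℕ) : Finset ℕ :=
  (Finset.Icc 1 N).filter (fun x => a < x ∧ x - a ∈ D)

lemma shift_count (D : Set ℕ) (a N : ℕ) : (badSet D a N).card ≤ cnt D N := by
  apply Finset.card_le_card_of_injOn (fun x => x - a)
  · intro x hx
    simp only [badSet, cnt, Finset.mem_coe, Finset.mem_filter, Finset.mem_Icc] at hx ⊢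
    exact ⟨⟨by omega, by omega⟩, hx.2.2⟩
  · intro x hx y hy hxy
    simp only [badSet, Finset.mem_coe, Finset.mem_filter, Finset.mem_Icc] at hx hy
    simp only at hxy
    omega

lemma good_infinite {C : Set ℕ} (hC : dzero Cᶜ) (F : Finset ℕ) :
    {x : ℕ | ∀ a ∈ F, a < x ∧ x - a ∈ C}.Infinite := by
  by_contra hfin
  rw [Set.not_infinite] at hfin
  obtain ⟨G, hG⟩ : ∃ G : Finset ℕ, ∀ x, x ∈ G ↔ x ∈ {x : ℕ | ∀ a ∈ F, a < x ∧ x - a ∈ C} :=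
    ⟨hfin.toFinset, fun x => hfin.mem_toFinset⟩
  set M := F.sup id + 1 with hM
  have key : ∀ N : ℕ, (N : ℝ) ≤ ((M + G.card : ℕ) : ℝ) + (F.card : ℝ) * (cnt Cᶜ N : ℝ) := by
    intro N
    have hsub : Finset.Icc (M + 1) N ⊆ G ∪ F.biUnion (fun a => badSet Cᶜ a N) := by
      intro x hx
      simp only [Finset.mem_Icc] at hx
      by_cases hxG : x ∈ {x : ℕ | ∀ a ∈ F, a < x ∧ x - a ∈ C}
      · exact Finset.mem_union_left _ ((hG x).2 hxG)
      · apply Finset.mem_union_right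
        simp only [Set.mem_setOf_eq] at hxG
        push_neg at hxG
        obtain ⟨a, haF, hbad⟩ := hxG
        have hax : a < x := by
          have : a ≤ F.sup id := Finset.le_sup (f := id) haF
          omega
        refine Finset.mem_biUnion.2 ⟨a, haF, ?_⟩
        simp only [badSet, Finset.mem_filter, Finset.mem_Icc, Set.mem_compl_iff]
        exact ⟨⟨by omega, hx.2⟩, hax, fun h => hbad hax h⟩
    have hcard : N ≤ M + G.card + F.card * cnt Cᶜ N := by
      have h1 := Finset.card_le_card hsub
      rw [Nat.card_Icc] at h1
      have h2 : (G ∪ F.biUnion (fun a => badSet Cᶜ a N)).card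
          ≤ G.card + F.card * cnt Cᶜ N := by
        refine le_trans (Finset.card_union_le _ _) ?_
        gcongr
        refine le_trans (Finset.card_biUnion_le) ?_
        refine le_trans (Finset.sum_le_card_nsmul _ _ _ (fun a _ => shift_count Cᶜ a N)) ?_
        simp [mul_comm]
      omega
    exact_mod_cast hcard
  have hL : Tendsto (fun N : ℕ => 1 - ((M + G.card : ℕ) : ℝ) / N) atTop (nhds 1) := by
    have : Tendsto (fun N : ℕ => ((M + G.card : ℕ) : ℝ) / N) atTop (nhds 0) := by
      exact (tendsto_const_nhds (x := ((M + G.card : ℕ) : ℝ))).div_atTop tendsto_natCast_atTop_atTop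
    simpa using (tendsto_const_nhds (x := (1:ℝ))).sub this
  have hR : Tendsto (fun N : ℕ => (F.card : ℝ) * dfun Cᶜ N) atTop (nhds 0) := by
    simpa using hC.const_mul (F.card : ℝ)
  have hle : ∀ᶠ N : ℕ in atTop, 1 - ((M + G.card : ℕ) : ℝ) / N ≤ (F.card : ℝ) * dfun Cᶜ N := by
    filter_upwards [eventually_gt_atTop 0] with N hN
    have hN' : (0:ℝ) < N := by exact_mod_cast hN
    have h2 : ((N:ℝ) - ((M + G.card : ℕ) : ℝ))/N ≤ ((F.card : ℝ) * (cnt Cᶜ N : ℝ))/N := by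
      rw [div_le_div_iff_of_pos_right hN']
      linarith [key N]
    rw [sub_div, div_self hN'.ne', mul_div_assoc] at h2
    exact h2
  have : (1:ℝ) ≤ 0 := le_of_tendsto_of_tendsto hL hR hle
  linarith

noncomputable def pickGood {C : Set ℕ} (hC : dzero Cᶜ) (F : Finset ℕ) : ℕ :=
  (good_infinite hC F).nonempty.choose

lemma pickGood_spec {C : Set ℕ} (hC : dzero Cᶜ) (F : Finset ℕ) :
    ∀ a ∈ F, a < pickGood hC F ∧ pickGood hC F - a ∈ C :=
  (good_infinite hC F).nonempty.choose_spec

noncomputable def chain {C : Set ℕ} (hC : dzero Cᶜ) : ℕ → Finset ℕ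
  | 0 => ∅
  | n + 1 => insert (pickGood hC (chain hC n)) (chain hC n)

lemma chain_mono {C : Set ℕ} (hC : dzero Cᶜ) : Monotone (chain hC) := by
  apply monotone_nat_of_le_succ
  intro n
  simp [chain, Finset.subset_insert]

lemma deltaSub_of_dzero_compl {C : Set ℕ} (hC : dzero Cᶜ) :
    ∃ Z : Set ℕ, Z.Infinite ∧ diffSet Z ⊆ C := by
  set z : ℕ → ℕ := fun n => pickGood hC (chain hC n) with hz
  have hmem : ∀ n, z n ∈ chain hC (n + 1) := fun n => Finset.mem_insert_self _ _
  have hlt : ∀ m n, m < n → z m < z n ∧ z n - z m ∈ C := by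
    intro m n hmn
    have : z m ∈ chain hC n := chain_mono hC hmn (hmem m)
    exact pickGood_spec hC (chain hC n) (z m) this
  have hsm : StrictMono z := fun m n h => (hlt m n h).1
  refine ⟨Set.range z, Set.infinite_range_of_injective hsm.injective, ?_⟩
  rintro d ⟨x, ⟨m, rfl⟩, x', ⟨n, rfl⟩, hxx, rfl⟩
  have hmn : m < n := hsm.lt_iff_lt.mp hxx
  exact (hlt m n hmn).2


section Ramsey

variable (A : Set ℕ)

noncomputable def pt (S : {S : Set ℕ // S.Infinite}) : ℕ := S.2.nonempty.choose

lemma pt_mem (S : {S : Set ℕ // S.Infinite}) : pt S ∈ S.1 := S.2.nonempty.choose_spec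

def branch1 (S : {S : Set ℕ // S.Infinite}) : Set ℕ :=
  {x ∈ S.1 | pt S < x ∧ x - pt S ∈ A}

def branch2 (S : {S : Set ℕ // S.Infinite}) : Set ℕ :=
  {x ∈ S.1 | pt S < x ∧ x - pt S ∉ A}

lemma branch_infinite (S : {S : Set ℕ // S.Infinite}) :
    (branch1 A S).Infinite ∨ (branch2 A S).Infinite := by
  rw [← Set.infinite_union]
  have : branch1 A S ∪ branch2 A S = S.1 \ Set.Iic (pt S) := by
    ext x
    simp only [branch1, branch2, Set.mem_union, Set.mem_setOf_eq, Set.mem_diff, Set.mem_Iic,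
      not_le]
    tauto
  rw [this]
  exact S.2.diff (Set.finite_Iic _)

noncomputable def nextS (S : {S : Set ℕ // S.Infinite}) : {S : Set ℕ // S.Infinite} :=
  if h : (branch1 A S).Infinite then ⟨branch1 A S, h⟩
  else ⟨branch2 A S, (branch_infinite A S).resolve_left h⟩

noncomputable def T (X : {S : Set ℕ // S.Infinite}) : ℕ → {S : Set ℕ // S.Infinite}
  | 0 => X
  | n + 1 => nextS A (T X n)

lemma T_succ_subset (X : {S : Set ℕ // S.Infinite}) (n : ℕ) :
    (T A X (n + 1)).1 ⊆ {x ∈ (T A X n).1 | pt (T A X n) < x} := by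
  show (nextS A (T A X n)).1 ⊆ _
  unfold nextS
  split
  · intro x hx; exact ⟨hx.1, hx.2.1⟩
  · intro x hx; exact ⟨hx.1, hx.2.1⟩

lemma T_mono (X : {S : Set ℕ // S.Infinite}) {m n : ℕ} (h : m ≤ n) :
    (T A X n).1 ⊆ (T A X m).1 := by
  induction n with
  | zero => simp_all
  | succ k ih =>
    rcases Nat.lt_or_ge m (k+1) with h' | h'
    · exact fun x hx => ih (by omega) ((T_succ_subset A X k hx).1)
    · have : m = k + 1 := by omega
      subst this; exact fun x hx => hx

lemma ramsey (A X : Set ℕ) (hX : X.Infinite) :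
    ∃ Y, Y ⊆ X ∧ Y.Infinite ∧ (diffSet Y ⊆ A ∨ diffSet Y ⊆ Aᶜ) := by
  set X' : {S : Set ℕ // S.Infinite} := ⟨X, hX⟩ with hX'
  set a : ℕ → ℕ := fun n => pt (T A X' n) with ha
  have hamem : ∀ n, a n ∈ (T A X' n).1 := fun n => pt_mem _
  have hsm : StrictMono a := by
    have hstep : ∀ n, a n < a (n + 1) := by
      intro n
      exact (T_succ_subset A X' n (hamem (n+1))).2
    exact strictMono_nat_of_lt_succ hstep
  have hx : ∀ n, a n ∈ X := fun n => T_mono A X' (Nat.zero_le n) (hamem n)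
  have hkey : ∀ m n, m < n →
      ((branch1 A (T A X' m)).Infinite → a n - a m ∈ A) ∧
      (¬(branch1 A (T A X' m)).Infinite → a n - a m ∉ A) := by
    intro m n hmn
    have h1 : a n ∈ (T A X' (m+1)).1 := T_mono A X' hmn (hamem n)
    have h2 : (T A X' (m+1)) = nextS A (T A X' m) := rfl
    constructor
    · intro hcol
      rw [h2] at h1
      unfold nextS at h1
      rw [dif_pos hcol] at h1
      exact h1.2.2
    · intro hcol
      rw [h2] at h1
      unfold nextS at h1
      rw [dif_neg hcol] at h1
      exact h1.2.2
  -- pigeonhole on colors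
  by_cases hcol : {n | (branch1 A (T A X' n)).Infinite}.Infinite
  · refine ⟨a '' {n | (branch1 A (T A X' n)).Infinite}, ?_, hcol.image (hsm.injective.injOn), Or.inl ?_⟩
    · rintro y ⟨n, _, rfl⟩; exact hx n
    · rintro d ⟨x, ⟨m, hm, rfl⟩, x', ⟨n, hn, rfl⟩, hlt, rfl⟩
      have hmn : m < n := hsm.lt_iff_lt.mp hlt
      exact (hkey m n hmn).1 hm
  · rw [Set.not_infinite] at hcol
    have hcol' : {n | ¬(branch1 A (T A X' n)).Infinite}.Infinite := by
      have := hcol.infinite_compl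
      simpa [Set.compl_setOf] using this
    refine ⟨a '' {n | ¬(branch1 A (T A X' n)).Infinite}, ?_, hcol'.image (hsm.injective.injOn), Or.inr ?_⟩
    · rintro y ⟨n, _, rfl⟩; exact hx n
    · rintro d ⟨x, ⟨m, hm, rfl⟩, x', ⟨n, hn, rfl⟩, hlt, rfl⟩
      have hmn : m < n := hsm.lt_iff_lt.mp hlt
      exact (hkey m n hmn).2 hm

end Ramsey
lemma ud_eq (A : Set ℕ) : upperDensity A = upperDensity' A := rfl

lemma diffSet_mono {Y Z : Set ℕ} (h : Y ⊆ Z) : diffSet Y ⊆ diffSet Z := by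
  rintro d ⟨x, hx, x', hx', hlt, rfl⟩
  exact ⟨x, h hx, x', h hx', hlt, rfl⟩

def Pd (B : Set ℕ) : Prop := ∀ X : Set ℕ, X.Infinite → ∃ Y, Y ⊆ X ∧ Y.Infinite ∧ diffSet Y ⊆ B

lemma Pd_univ : Pd Set.univ := fun X hX => ⟨X, subset_rfl, hX, Set.subset_univ _⟩

lemma Pd_inter {B₁ B₂ : Set ℕ} (h₁ : Pd B₁) (h₂ : Pd B₂) : Pd (B₁ ∩ B₂) := by
  intro X hX
  obtain ⟨Y₁, hY₁X, hY₁inf, hY₁⟩ := h₁ X hX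
  obtain ⟨Y₂, hY₂Y₁, hY₂inf, hY₂⟩ := h₂ Y₁ hY₁inf
  exact ⟨Y₂, hY₂Y₁.trans hY₁X, hY₂inf, Set.subset_inter
    ((diffSet_mono hY₂Y₁).trans hY₁) hY₂⟩

lemma dzero_compl_univ : dzero (Set.univ : Set ℕ)ᶜ := by
  rw [Set.compl_univ]; exact dzero_empty

noncomputable def FF : Filter ℕ where
  sets := {S | ∃ B C : Set ℕ, Pd B ∧ dzero Cᶜ ∧ B ∩ C ⊆ S}
  univ_sets := ⟨Set.univ, Set.univ, Pd_univ, dzero_compl_univ, Set.subset_univ _⟩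
  sets_of_superset := by
    rintro S S' ⟨B, C, hB, hC, hBC⟩ hSS'
    exact ⟨B, C, hB, hC, hBC.trans hSS'⟩
  inter_sets := by
    rintro S S' ⟨B, C, hB, hC, hBC⟩ ⟨B', C', hB', hC', hBC'⟩
    refine ⟨B ∩ B', C ∩ C', Pd_inter hB hB', ?_, ?_⟩
    · have : (C ∩ C')ᶜ = Cᶜ ∪ C'ᶜ := by rw [Set.compl_inter]
      rw [this]; exact dzero_union hC hC'
    · intro x hx
      exact ⟨hBC ⟨hx.1.1, hx.2.1⟩, hBC' ⟨hx.1.2, hx.2.2⟩⟩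

lemma mem_FF_of_Pd {B : Set ℕ} (h : Pd B) : B ∈ FF :=
  ⟨B, Set.univ, h, dzero_compl_univ, fun x hx => hx.1⟩

lemma mem_FF_of_dzero {C : Set ℕ} (h : dzero Cᶜ) : C ∈ FF :=
  ⟨Set.univ, C, Pd_univ, h, fun x hx => hx.2⟩

lemma FF_mem_nonempty {S : Set ℕ} (hS : S ∈ FF) : S.Nonempty := by
  obtain ⟨B, C, hB, hC, hBC⟩ := hS
  obtain ⟨Z, hZinf, hZC⟩ := deltaSub_of_dzero_compl hC
  obtain ⟨Y, hYZ, hYinf, hYB⟩ := hB Z hZinf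
  obtain ⟨y, hy⟩ := hYinf.nonempty
  obtain ⟨y', hy', hyy'⟩ := hYinf.exists_gt y
  have hd : y' - y ∈ diffSet Y := ⟨y, hy, y', hy', hyy', rfl⟩
  exact ⟨y' - y, hBC ⟨hYB hd, hZC (diffSet_mono hYZ hd)⟩⟩

instance FF_neBot : FF.NeBot :=
  Filter.forall_mem_nonempty_iff_neBot.mp (fun _ hS => FF_mem_nonempty hS)

-- translate counting for the triple argument
noncomputable def TS (A : Set ℕ) (t n : ℕ) : Finset ℕ :=
  (Finset.Icc 1 n).filter (fun b => b + t ∈ A)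

lemma cnt_le_TS (A : Set ℕ) (t n : ℕ) : cnt A n ≤ t + (TS A t n).card := by
  have hsub : (Finset.Icc 1 n).filter (fun m => m ∈ A)
      ⊆ Finset.Icc 1 t ∪ (Finset.Icc 1 n).filter (fun m => m ∈ A ∧ t < m) := by
    intro m hm
    simp only [Finset.mem_filter, Finset.mem_Icc] at hm
    rcases le_or_gt m t with h | h
    · exact Finset.mem_union_left _ (Finset.mem_Icc.2 ⟨hm.1.1, h⟩)
    · exact Finset.mem_union_right _ (by
        simp only [Finset.mem_filter, Finset.mem_Icc]
        exact ⟨hm.1, hm.2, h⟩)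
  have h2 : ((Finset.Icc 1 n).filter (fun m => m ∈ A ∧ t < m)).card ≤ (TS A t n).card := by
    apply Finset.card_le_card_of_injOn (fun m => m - t)
    · intro m hm
      simp only [Finset.mem_coe, Finset.mem_filter, Finset.mem_Icc] at hm
      simp only [TS, Finset.mem_coe, Finset.mem_filter, Finset.mem_Icc]
      have : m - t + t = m := by omega
      refine ⟨⟨by omega, by omega⟩, ?_⟩
      rw [this]; exact hm.2.1
    · intro x hx y hy hxy
      simp only [Finset.mem_coe, Finset.mem_filter, Finset.mem_Icc] at hx hy
      simp only at hxy
      omega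
  calc cnt A n ≤ (Finset.Icc 1 t ∪ (Finset.Icc 1 n).filter (fun m => m ∈ A ∧ t < m)).card :=
        Finset.card_le_card hsub
    _ ≤ (Finset.Icc 1 t).card + ((Finset.Icc 1 n).filter (fun m => m ∈ A ∧ t < m)).card :=
        Finset.card_union_le _ _
    _ ≤ t + (TS A t n).card := by
        rw [Nat.card_Icc]
        omega

lemma triple_lemma {A : Set ℕ} (hA : IsDeltaSet A) (hd : 0 < upperDensity A) (ℓ : ℕ) :
    ∃ b c : ℕ, b ∈ A ∧ c ∈ A ∧ b + ℓ * c ∈ A := by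
  obtain ⟨X, hX, hXA⟩ := hA
  have hXset : {x | x ∈ X}.Infinite := hX
  set e : ℕ → ℕ := fun n => Nat.nth (· ∈ X) n with he
  have hesm : StrictMono e := Nat.nth_strictMono hXset
  have heX : ∀ n, e n ∈ X := fun n => Nat.nth_mem_of_infinite hXset n
  obtain ⟨k, hk⟩ := exists_nat_gt (1 / upperDensity A)
  have hk0 : (0:ℝ) < k := lt_trans (by positivity) hk
  have claim : ∃ i j b, i < j ∧ j < k ∧ (b + ℓ * e i ∈ A) ∧ (b + ℓ * e j ∈ A) := by
    by_contra hno
    push_neg at hno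
    -- pairwise disjointness of the translates
    have hdisj : ∀ n : ℕ, ∀ i ∈ Finset.range k, ∀ j ∈ Finset.range k, i ≠ j →
        Disjoint (TS A (ℓ * e i) n) (TS A (ℓ * e j) n) := by
      intro n i hi j hj hij
      rw [Finset.disjoint_left]
      intro b hb1 hb2
      simp only [TS, Finset.mem_filter] at hb1 hb2
      rcases Nat.lt_or_ge i j with h | h
      · exact hno i j b h (Finset.mem_range.1 hj) hb1.2 hb2.2
      · have h' : j < i := by omega
        exact hno j i b h' (Finset.mem_range.1 hi) hb2.2 hb1.2
    set Cst := ∑ i ∈ Finset.range k, ℓ * e i with hCst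
    have hcount : ∀ n : ℕ, k * cnt A n ≤ Cst + n := by
      intro n
      have hsum : ∑ i ∈ Finset.range k, (TS A (ℓ * e i) n).card ≤ n := by
        rw [← Finset.card_biUnion (hdisj n)]
        calc ((Finset.range k).biUnion (fun i => TS A (ℓ * e i) n)).card
            ≤ (Finset.Icc 1 n).card := by
              apply Finset.card_le_card
              intro b hb
              obtain ⟨i, _, hbi⟩ := Finset.mem_biUnion.1 hb
              exact Finset.mem_of_mem_filter b hbi
          _ = n := by rw [Nat.card_Icc]; omega
      calc k * cnt A n = ∑ _i ∈ Finset.range k, cnt A n := by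
            rw [Finset.sum_const, Finset.card_range, smul_eq_mul]
        _ ≤ ∑ i ∈ Finset.range k, (ℓ * e i + (TS A (ℓ * e i) n).card) :=
            Finset.sum_le_sum (fun i _ => cnt_le_TS A (ℓ * e i) n)
        _ = Cst + ∑ i ∈ Finset.range k, (TS A (ℓ * e i) n).card := by
            rw [Finset.sum_add_distrib]
        _ ≤ Cst + n := by omega
    -- pass to real limits
    have hv : Tendsto (fun n : ℕ => ((Cst : ℝ) / n + 1) / k) atTop (nhds (1 / k)) := by
      have h1 : Tendsto (fun n : ℕ => (Cst : ℝ) / n) atTop (nhds 0) :=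
        tendsto_const_nhds.div_atTop tendsto_natCast_atTop_atTop
      have h2 : Tendsto (fun n : ℕ => (Cst : ℝ) / n + 1) atTop (nhds 1) := by
        simpa using h1.add tendsto_const_nhds
      exact h2.div_const k
    have hle : ∀ᶠ n : ℕ in atTop, dfun A n ≤ ((Cst : ℝ) / n + 1) / k := by
      filter_upwards [eventually_gt_atTop 0] with n hn
      have hn' : (0:ℝ) < n := by exact_mod_cast hn
      have h1 : (k : ℝ) * cnt A n ≤ Cst + n := by exact_mod_cast hcount n
      rw [dfun, div_le_div_iff₀ hn' hk0]
      calc (cnt A n : ℝ) * k = k * cnt A n := by ring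
        _ ≤ Cst + n := h1
        _ = ((Cst : ℝ) / n + 1) * n := by field_simp
    have hlim : upperDensity A ≤ 1 / k := by
      rw [ud_eq, upperDensity']
      calc limsup (dfun A) atTop ≤ limsup (fun n : ℕ => ((Cst : ℝ) / n + 1) / k) atTop := by
            exact limsup_le_limsup (Filter.Eventually.mono hle (fun n h => h))
              ((bddBelow A).isCoboundedUnder_le) (hv.isBoundedUnder_le)
        _ = 1 / k := hv.limsup_eq
    have : (1:ℝ) / k < upperDensity A := by
      rw [div_lt_iff₀ hk0]
      rw [div_lt_iff₀ hd] at hk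
      linarith [mul_comm (upperDensity A) (k:ℝ)]
    linarith
  obtain ⟨i, j, b, hij, hjk, h1, h2⟩ := claim
  have heij : e i < e j := hesm hij
  have hc : e j - e i ∈ A := hXA ⟨e i, heX i, e j, heX j, heij, rfl⟩
  refine ⟨b + ℓ * e i, e j - e i, h1, hc, ?_⟩
  have harith : b + ℓ * e i + ℓ * (e j - e i) = b + ℓ * e j := by
    have : e i + (e j - e i) = e j := by omega
    calc b + ℓ * e i + ℓ * (e j - e i) = b + ℓ * (e i + (e j - e i)) := by rw [Nat.mul_add]; ring
      _ = b + ℓ * e j := by rw [this]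
  rw [harith]
  exact h2

theorem stmt7 :
    ∃ U : Ultrafilter ℕ,
      (∀ A ∈ U, IsDeltaSet A ∧ 0 < upperDensity A) ∧
      (∀ A ∈ U, ∀ ℓ : ℕ, ∃ b c : ℕ, b ∈ A ∧ c ∈ A ∧ b + ℓ * c ∈ A) := by
  obtain ⟨U, hU⟩ := Ultrafilter.exists_le FF
  have hmem : ∀ S ∈ FF, S ∈ U := fun S hS => hU hS
  have main : ∀ A ∈ U, IsDeltaSet A ∧ 0 < upperDensity A := by
    intro A hA
    constructor
    · by_contra hnd
      have hP : Pd Aᶜ := by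
        intro X hX
        obtain ⟨Y, hYX, hYinf, hY⟩ := ramsey A X hX
        cases hY with
        | inl h => exact absurd ⟨Y, hYinf, h⟩ hnd
        | inr h => exact ⟨Y, hYX, hYinf, h⟩
      have hAc : Aᶜ ∈ U := hmem _ (mem_FF_of_Pd hP)
      exact (Ultrafilter.compl_mem_iff_notMem.mp hAc) hA
    · have h0 : 0 ≤ upperDensity A := by rw [ud_eq]; exact upperDensity'_nonneg A
      rcases h0.lt_or_eq with h | h
      · exact h
      · exfalso
        have hz : dzero A := dzero_of_upperDensity'_eq_zero (by rw [← ud_eq]; exact h.symm)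
        have hAc : Aᶜ ∈ U := hmem _ (mem_FF_of_dzero (by rw [compl_compl]; exact hz))
        exact (Ultrafilter.compl_mem_iff_notMem.mp hAc) hA
  exact ⟨U, main, fun A hA ℓ => triple_lemma (main A hA).1 (main A hA).2 ℓ⟩
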